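/- Let λ₁, λ₂ > 0 and let X, Y be independent with pmfs f_{λ₁}, f_{λ₂} from the Cauchy-Cacoullos family f_λ(k) = (tanh(λπ)/π)·λ/(λ²+k²). Then, with α(λ) = cosh(λπ), for every k ∈ ℤ: P(X+Y = k) = [α(λ₁+λ₂)/(2α(λ₁)α(λ₂))]·f_{λ₁+λ₂}(k) + [α(|λ₂-λ₁|)/(2α(λ₁)α(λ₂))]·f_{|λ₂-λ₁|}(k), where f₀(k) = 1 if k = 0 and 0 otherwise. -/

import Mathlib

open Real MeasureTheory

/-- The Cauchy-Cacoullos pmf, extended to `λ = 0` by the point mass at `0`. -/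
noncomputable def ccPmf (l : ℝ) (k : ℤ) : ℝ :=
  if l = 0 then (if k = 0 then 1 else 0)
  else (Real.tanh (l * π) / π) * (l / (l ^ 2 + (k : ℝ) ^ 2))

/-- rescaled pmf: the Fourier coefficients of `t ↦ cosh (l (π - t))`. -/
noncomputable def cR (l : ℝ) (n : ℤ) : ℝ := Real.cosh (l * π) * ccPmf l n

noncomputable def gR (l : ℝ) : ℝ → ℂ := fun t => Complex.cosh (l * (π - t))

instance fact_two_pi_pos : Fact (0 < 2 * π) := ⟨by positivity⟩

noncomputable def G (l : ℝ) : C(AddCircle (2 * π), ℂ) :=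
  ⟨AddCircle.liftIco (2 * π) 0 (gR l),
   AddCircle.liftIco_zero_continuous
     (by
       show Complex.cosh _ = Complex.cosh _
       rw [show ((l : ℂ) * (↑π - (2 * π : ℝ))) = -(l * π) by push_cast; ring,
         Complex.cosh_neg]
       norm_num)
     (Continuous.continuousOn (by unfold gR; fun_prop))⟩

lemma G_apply (l : ℝ) {t : ℝ} (ht : t ∈ Set.Ico (0:ℝ) (0 + 2 * π)) :
    G l (t : AddCircle (2 * π)) = Complex.cosh (l * (π - t)) :=
  AddCircle.liftIco_coe_apply (f := gR l) ht

-- scratch: derivative lemma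
lemma hasDeriv_aux (l : ℝ) (n : ℤ) (h : (l:ℂ)^2 + (n:ℂ)^2 ≠ 0) (t : ℝ) :
    HasDerivAt (fun t : ℝ => Complex.exp (-(n*t)*Complex.I) *
        (-(l:ℂ) * Complex.sinh (l*((π:ℂ)-t)) + Complex.I*n*Complex.cosh (l*((π:ℂ)-t)))
        / ((l:ℂ)^2+(n:ℂ)^2))
      (Complex.exp (-(n*t)*Complex.I) * Complex.cosh (l*((π:ℂ)-t))) t := by
  have main : ∀ z : ℂ, HasDerivAt (fun z : ℂ => Complex.exp (-(n*z)*Complex.I) *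
        (-(l:ℂ) * Complex.sinh (l*((π:ℂ)-z)) + Complex.I*n*Complex.cosh (l*((π:ℂ)-z)))
        / ((l:ℂ)^2+(n:ℂ)^2))
      (Complex.exp (-(n*z)*Complex.I) * Complex.cosh (l*((π:ℂ)-z))) z := by
    intro z
    have hu : HasDerivAt (fun z : ℂ => (l:ℂ)*((π:ℂ)-z)) (-(l:ℂ)) z := by
      simpa using ((hasDerivAt_id z).const_sub (π:ℂ)).const_mul (l:ℂ)
    have hsinh : HasDerivAt (fun z : ℂ => Complex.sinh ((l:ℂ)*((π:ℂ)-z)))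
        (Complex.cosh ((l:ℂ)*((π:ℂ)-z)) * -(l:ℂ)) z :=
      (Complex.hasDerivAt_sinh _).comp z hu
    have hcosh : HasDerivAt (fun z : ℂ => Complex.cosh ((l:ℂ)*((π:ℂ)-z)))
        (Complex.sinh ((l:ℂ)*((π:ℂ)-z)) * -(l:ℂ)) z :=
      (Complex.hasDerivAt_cosh _).comp z hu
    have hin : HasDerivAt (fun z : ℂ => -((n:ℂ)*z)*Complex.I) (-(n:ℂ)*Complex.I) z := by
      simpa using (((hasDerivAt_id z).const_mul (n:ℂ)).neg).mul_const Complex.I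
    have hexp : HasDerivAt (fun z : ℂ => Complex.exp (-((n:ℂ)*z)*Complex.I))
        (Complex.exp (-((n:ℂ)*z)*Complex.I) * (-(n:ℂ)*Complex.I)) z :=
      (Complex.hasDerivAt_exp _).comp z hin
    have := (hexp.mul ((hsinh.const_mul (-(l:ℂ))).add (hcosh.const_mul (Complex.I*(n:ℂ))))).div_const
        ((l:ℂ)^2+(n:ℂ)^2)
    refine this.congr_deriv ?_
    simp only [Pi.add_apply]
    rw [div_eq_iff h]
    linear_combination -(Complex.exp (-((n:ℂ)*z)*Complex.I) * Complex.cosh ((l:ℂ)*((π:ℂ)-z)) * (n:ℂ)^2) * Complex.I_sq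
  exact (main t).comp_ofReal

lemma fourierCoeff_G (l : ℝ) (n : ℤ) :
    fourierCoeff (⇑(G l)) n = ((cR l n : ℝ) : ℂ) := by
  have h2π : (0:ℝ) < 2 * π := by positivity
  rw [show ⇑(G l) = AddCircle.liftIco (2 * π) 0 (gR l) from rfl,
    fourierCoeff_liftIco_eq, fourierCoeffOn_eq_integral]
  have hint : ∀ x : ℝ, (fourier (-n) (x : AddCircle (0 + 2*π - 0)) : ℂ) • gR l x
      = Complex.exp (-(n*x)*Complex.I) * Complex.cosh (l*((π:ℂ)-x)) := by
    intro x
    rw [smul_eq_mul, fourier_coe_apply]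
    have hπ : (π:ℂ) ≠ 0 := Complex.ofReal_ne_zero.mpr Real.pi_ne_zero
    congr 2
    push_cast
    field_simp
    ring
  rw [intervalIntegral.integral_congr (g := fun x : ℝ =>
      Complex.exp (-(n*x)*Complex.I) * Complex.cosh (l*((π:ℂ)-x))) (fun x _ => hint x)]
  have hD : ((l:ℂ)^2+(n:ℂ)^2) = (((l^2+(n:ℝ)^2 : ℝ)) : ℂ) := by push_cast; ring
  by_cases hc : (l:ℂ)^2+(n:ℂ)^2 = 0
  · -- degenerate case l = 0, n = 0
    have hln : l = 0 ∧ n = 0 := by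
      rw [hD, Complex.ofReal_eq_zero] at hc
      have h1 : l = 0 := by nlinarith [sq_nonneg l, sq_nonneg ((n:ℝ))]
      have h2 : (n:ℝ) = 0 := by nlinarith [sq_nonneg l, sq_nonneg ((n:ℝ))]
      exact ⟨h1, by exact_mod_cast h2⟩
    obtain ⟨rfl, rfl⟩ := hln
    simp only [Int.cast_zero, Complex.ofReal_zero, zero_mul, neg_zero, Complex.exp_zero,
      Complex.cosh_zero, one_mul, zero_add, sub_zero]
    rw [intervalIntegral.integral_const]
    simp [cR, ccPmf]
    field_simp
  · rw [intervalIntegral.integral_eq_sub_of_hasDerivAt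
      (f := fun t : ℝ => Complex.exp (-(n*t)*Complex.I) *
        (-(l:ℂ) * Complex.sinh (l*((π:ℂ)-t)) + Complex.I*n*Complex.cosh (l*((π:ℂ)-t)))
        / ((l:ℂ)^2+(n:ℂ)^2))
      (fun t _ => hasDeriv_aux l n hc t)
      ((Continuous.intervalIntegrable (by fun_prop :
        Continuous fun t : ℝ => Complex.exp (-((n:ℂ)*t)*Complex.I) *
          Complex.cosh ((l:ℂ)*((π:ℂ)-t))) _ _))]
    have e1 : Complex.exp (-((n:ℂ)*(((0:ℝ)+2*π : ℝ):ℂ))*Complex.I) = 1 := by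
      have h := Complex.exp_int_mul_two_pi_mul_I (-n)
      rw [← h]
      congr 1
      push_cast
      ring
    have e2 : (l:ℂ)*((π:ℂ)-(((0:ℝ)+2*π:ℝ):ℂ)) = -((l:ℂ)*(π:ℂ)) := by push_cast; ring
    have e3 : (l:ℂ)*((π:ℂ)-(((0:ℝ)):ℂ)) = (l:ℂ)*(π:ℂ) := by push_cast; ring
    have e4 : (-((n:ℂ)*(((0:ℝ)):ℂ))*Complex.I) = 0 := by push_cast; ring
    rw [e1, e2, e3, e4, Complex.sinh_neg, Complex.cosh_neg, Complex.exp_zero]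
    by_cases hl : l = 0
    · subst hl
      have hn : (n:ℂ) ≠ 0 := by
        intro h0
        apply hc
        rw [h0]
        norm_num
      have hn' : n ≠ 0 := fun h0 => hn (by simp [h0])
      simp [cR, ccPmf, hn']
    · have hπ : (π:ℂ) ≠ 0 := Complex.ofReal_ne_zero.mpr Real.pi_ne_zero
      have hch : (Real.cosh (l*π) : ℂ) ≠ 0 :=
        Complex.ofReal_ne_zero.mpr (Real.cosh_pos (l*π)).ne'
      have hq : (0:ℝ) < l^2 + (n:ℝ)^2 := by
        nlinarith [sq_nonneg ((n:ℝ)), pow_pos (abs_pos.mpr hl) 2, sq_abs l]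
      have hrr : Real.cosh (l*π) * (Real.tanh (l*π) / π * (l/(l^2+(n:ℝ)^2)))
          = l * Real.sinh (l*π) / (π * (l^2+(n:ℝ)^2)) := by
        rw [Real.tanh_eq_sinh_div_cosh]
        have h1 := (Real.cosh_pos (l*π)).ne'
        field_simp
      rw [cR, ccPmf, if_neg hl, hrr, Complex.real_smul]
      push_cast
      field_simp
      ring

lemma summable_cR (l : ℝ) (hl : 0 < l) : Summable (fun n : ℤ => cR l n) := by
  have hbase : Summable (fun n : ℤ => 1/(n:ℝ)^2 + (if n = 0 then 1/l^2 else 0)) := by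
    refine (summable_one_div_int_pow.mpr one_lt_two).add
      (summable_of_ne_finset_zero (s := {0}) ?_)
    intro n hn
    simp only [Finset.mem_singleton] at hn
    simp [hn]
  have h1 : Summable (fun n : ℤ => 1/(l^2+(n:ℝ)^2)) := by
    refine Summable.of_nonneg_of_le (fun n => by positivity) (fun n => ?_) hbase
    by_cases hn : n = 0
    · subst hn
      simp
    · have hn' : (0:ℝ) < (n:ℝ)^2 := by
        have : ((n:ℝ)) ≠ 0 := Int.cast_ne_zero.mpr hn
        positivity
      simp only [hn, if_false, add_zero]
      exact one_div_le_one_div_of_le hn' (by nlinarith [sq_nonneg l])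
  refine Summable.congr (h1.mul_left (Real.cosh (l*π) * (Real.tanh (l*π)/π) * l)) (fun n => ?_)
  rw [cR, ccPmf, if_neg hl.ne']
  ring

lemma summable_fourierCoeff_G (l : ℝ) (hl : 0 < l) :
    Summable (fourierCoeff (⇑(G l))) := by
  have : (fourierCoeff (⇑(G l))) = fun n => ((cR l n : ℝ) : ℂ) :=
    funext (fun n => fourierCoeff_G l n)
  rw [this, Complex.summable_ofReal]
  exact summable_cR l hl

lemma G_mul (l₁ l₂ : ℝ) (x : AddCircle (2 * π)) :
    G l₁ x * G l₂ x = (G (l₁+l₂) x + G |l₂ - l₁| x) / 2 := by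
  obtain ⟨t, ht, rfl⟩ : ∃ t : ℝ, t ∈ Set.Ico (0:ℝ) (0 + 2*π) ∧ (↑t : AddCircle (2*π)) = x := by
    rcases (AddCircle.equivIco (2*π) 0).symm.surjective x with ⟨⟨t, ht⟩, h⟩
    exact ⟨t, ht, h⟩
  rw [G_apply _ ht, G_apply _ ht, G_apply _ ht, G_apply _ ht]
  have habs : Complex.cosh ((|l₂ - l₁| : ℝ) * ((π:ℂ) - t))
      = Complex.cosh (((l₂ - l₁ : ℝ) : ℂ) * ((π:ℂ) - t)) := by
    rcases abs_cases (l₂ - l₁) with ⟨h, _⟩ | ⟨h, _⟩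
    · rw [h]
    · rw [h]
      push_cast
      rw [show (-((l₂:ℂ) - l₁) * ((π:ℂ) - t)) = -(((l₂:ℂ) - l₁) * ((π:ℂ) - t)) by ring,
        Complex.cosh_neg]
  rw [habs]
  push_cast
  rw [show ((l₁:ℂ)+l₂)*((π:ℂ)-t) = (l₁:ℂ)*((π:ℂ)-t) + (l₂:ℂ)*((π:ℂ)-t) by ring,
    show ((l₂:ℂ)-l₁)*((π:ℂ)-t) = (l₂:ℂ)*((π:ℂ)-t) - (l₁:ℂ)*((π:ℂ)-t) by ring,
    Complex.cosh_add, Complex.cosh_sub]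
  ring

open AddCircle in
lemma integrable_cont (f : AddCircle (2*π) → ℂ) (hf : Continuous f) :
    Integrable f (haarAddCircle) :=
  hf.integrable_of_hasCompactSupport ((isClosed_tsupport _).isCompact)

open AddCircle in
lemma fourierCoeff_add' (f g : AddCircle (2*π) → ℂ) (hf : Continuous f) (hg : Continuous g)
    (n : ℤ) : fourierCoeff (fun x => f x + g x) n = fourierCoeff f n + fourierCoeff g n := by
  simp only [fourierCoeff, smul_eq_mul, mul_add]
  exact integral_add (integrable_cont _ ((map_continuous (fourier (-n))).mul hf))
    (integrable_cont _ ((map_continuous (fourier (-n))).mul hg))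

open AddCircle in
lemma hasSum_key_aux (l₁ l₂ : ℝ) (h₁ : 0 < l₁) (k : ℤ) :
    HasSum (fun j : ℤ => fourierCoeff (⇑(G l₁)) j * fourierCoeff (⇑(G l₂)) (k - j))
      (fourierCoeff (fun x => G l₁ x * G l₂ x) k) := by
  have hs1 := summable_fourierCoeff_G l₁ h₁
  have hpt := fun x => has_pointwise_sum_fourier_series_of_summable (f := G l₁) hs1 x
  have hlim : ∀ x : AddCircle (2*π), HasSum
      (fun j : ℤ => fourierCoeff (⇑(G l₁)) j * ((fourier (-(k - j))) x * G l₂ x))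
      (G l₁ x * ((fourier (-k)) x * G l₂ x)) := by
    intro x
    have h1 := (hpt x).mul_right ((fourier (-k)) x * G l₂ x)
    have heq : (fun j : ℤ => fourierCoeff (⇑(G l₁)) j * ((fourier (-(k - j))) x * G l₂ x))
        = fun j => (fourierCoeff (⇑(G l₁)) j • (fourier j) x) * ((fourier (-k)) x * G l₂ x) := by
      funext j
      rw [smul_eq_mul, show -(k - j) = j + -k by ring, fourier_add]
      ring
    rw [heq]
    exact h1
  have H := MeasureTheory.hasSum_integral_of_dominated_convergence
    (μ := (haarAddCircle : Measure (AddCircle (2*π))))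
    (F := fun (j : ℤ) (x : AddCircle (2*π)) =>
      fourierCoeff (⇑(G l₁)) j * ((fourier (-(k - j))) x * G l₂ x))
    (f := fun x => G l₁ x * ((fourier (-k)) x * G l₂ x))
    (bound := fun j _ => ‖fourierCoeff (⇑(G l₁)) j‖ * ‖G l₂‖)
    (fun j => (Continuous.aestronglyMeasurable
      (continuous_const.mul ((map_continuous _).mul (map_continuous _)))))
    (fun j => Filter.Eventually.of_forall (fun x => by
      have h5 : ‖((fourier (-(k - j))) x : ℂ)‖ = 1 := Circle.norm_coe _
      show ‖_ * (_ * _)‖ ≤ _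
      rw [norm_mul, norm_mul, h5, one_mul]
      exact mul_le_mul_of_nonneg_left (ContinuousMap.norm_coe_le_norm _ _) (norm_nonneg _)))
    (Filter.Eventually.of_forall (fun x => hs1.norm.mul_right _))
    (integrable_const _)
    (Filter.Eventually.of_forall (fun x => hlim x))
  have hterm : ∀ j : ℤ, (∫ x : AddCircle (2*π),
      fourierCoeff (⇑(G l₁)) j * ((fourier (-(k - j))) x * G l₂ x) ∂haarAddCircle)
      = fourierCoeff (⇑(G l₁)) j * fourierCoeff (⇑(G l₂)) (k - j) := by
    intro j
    rw [MeasureTheory.integral_const_mul]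
    rfl
  have hval : (∫ x : AddCircle (2*π),
      G l₁ x * ((fourier (-k)) x * G l₂ x) ∂haarAddCircle)
      = fourierCoeff (fun x => G l₁ x * G l₂ x) k := by
    rw [fourierCoeff]
    congr 1
    funext x
    rw [smul_eq_mul]
    ring
  rw [← hval, show (fun j : ℤ => fourierCoeff (⇑(G l₁)) j * fourierCoeff (⇑(G l₂)) (k - j))
      = fun j : ℤ => (∫ x : AddCircle (2*π),
        fourierCoeff (⇑(G l₁)) j * ((fourier (-(k - j))) x * G l₂ x) ∂haarAddCircle)
      from funext fun j => (hterm j).symm]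
  exact H

open AddCircle in
lemma hasSum_key (l₁ l₂ : ℝ) (h₁ : 0 < l₁) (k : ℤ) :
    HasSum (fun j : ℤ => cR l₁ j * cR l₂ (k - j))
      ((cR (l₁+l₂) k + cR |l₂ - l₁| k) / 2) := by
  have H := hasSum_key_aux l₁ l₂ h₁ k
  have hprod : fourierCoeff (fun x : AddCircle (2*π) => G l₁ x * G l₂ x) k
      = (((cR (l₁+l₂) k + cR |l₂ - l₁| k) / 2 : ℝ) : ℂ) := by
    have h6 : (fun x : AddCircle (2*π) => G l₁ x * G l₂ x)
        = fun x => (2⁻¹:ℂ) * (G (l₁+l₂) x + G (|l₂ - l₁|) x) := by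
      funext x
      rw [G_mul]
      ring
    rw [h6, fourierCoeff.const_mul,
      fourierCoeff_add' _ _ (map_continuous _) (map_continuous _),
      fourierCoeff_G, fourierCoeff_G]
    push_cast
    ring
  rw [hprod] at H
  have hterm : (fun j : ℤ => fourierCoeff (⇑(G l₁)) j * fourierCoeff (⇑(G l₂)) (k - j))
      = fun j : ℤ => ((cR l₁ j * cR l₂ (k-j) : ℝ) : ℂ) := by
    funext j
    rw [fourierCoeff_G, fourierCoeff_G]
    push_cast
    ring
  rw [hterm] at H
  exact Complex.hasSum_ofReal.mp H

theorem stmt_17 {Ω : Type*} [MeasurableSpace Ω] (μ : Measure Ω) [IsProbabilityMeasure μ]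
    (l₁ l₂ : ℝ) (hl₁ : 0 < l₁) (hl₂ : 0 < l₂)
    (X Y : Ω → ℤ) (hX : Measurable X) (hY : Measurable Y)
    (hindep : ProbabilityTheory.IndepFun X Y μ)
    (hXpmf : ∀ k : ℤ, (μ {ω | X ω = k}).toReal = ccPmf l₁ k)
    (hYpmf : ∀ k : ℤ, (μ {ω | Y ω = k}).toReal = ccPmf l₂ k)
    (k : ℤ) :
    (μ {ω | X ω + Y ω = k}).toReal =
      (Real.cosh ((l₁ + l₂) * π) / (2 * Real.cosh (l₁ * π) * Real.cosh (l₂ * π))) *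
          ccPmf (l₁ + l₂) k +
        (Real.cosh (|l₂ - l₁| * π) / (2 * Real.cosh (l₁ * π) * Real.cosh (l₂ * π))) *
          ccPmf |l₂ - l₁| k := by
  have hc₁ : (0:ℝ) < Real.cosh (l₁ * π) := Real.cosh_pos _
  have hc₂ : (0:ℝ) < Real.cosh (l₂ * π) := Real.cosh_pos _
  have key : HasSum (fun j : ℤ => ccPmf l₁ j * ccPmf l₂ (k - j))
      ((Real.cosh ((l₁ + l₂) * π) / (2 * Real.cosh (l₁ * π) * Real.cosh (l₂ * π))) *
          ccPmf (l₁ + l₂) k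
        + (Real.cosh (|l₂ - l₁| * π) / (2 * Real.cosh (l₁ * π) * Real.cosh (l₂ * π))) *
          ccPmf |l₂ - l₁| k) := by
    have H := (hasSum_key l₁ l₂ hl₁ k).div_const (Real.cosh (l₁ * π) * Real.cosh (l₂ * π))
    have hfun : (fun j : ℤ => cR l₁ j * cR l₂ (k-j) / (Real.cosh (l₁ * π) * Real.cosh (l₂ * π)))
        = fun j => ccPmf l₁ j * ccPmf l₂ (k-j) := by
      funext j
      rw [cR, cR]
      field_simp
    have hval : (cR (l₁+l₂) k + cR |l₂ - l₁| k) / 2 / (Real.cosh (l₁ * π) * Real.cosh (l₂ * π))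
        = (Real.cosh ((l₁ + l₂) * π) / (2 * Real.cosh (l₁ * π) * Real.cosh (l₂ * π))) *
          ccPmf (l₁ + l₂) k
        + (Real.cosh (|l₂ - l₁| * π) / (2 * Real.cosh (l₁ * π) * Real.cosh (l₂ * π))) *
          ccPmf |l₂ - l₁| k := by
      rw [cR, cR]
      ring
    rw [hval] at H
    exact hfun ▸ H
  have hmeas : ∀ j : ℤ, MeasurableSet (X ⁻¹' {j} ∩ Y ⁻¹' {k-j}) :=
    fun j => (hX (measurableSet_singleton j)).inter (hY (measurableSet_singleton _))
  have hdisj : Pairwise (Function.onFun Disjoint (fun j : ℤ => X ⁻¹' {j} ∩ Y ⁻¹' {k-j})) := by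
    intro i j hij
    refine Set.disjoint_left.mpr ?_
    rintro ω ⟨h1, -⟩ ⟨h2, -⟩
    exact hij ((Set.mem_singleton_iff.mp h1).symm.trans (Set.mem_singleton_iff.mp h2))
  have hunion : {ω | X ω + Y ω = k} = ⋃ j : ℤ, (X ⁻¹' {j} ∩ Y ⁻¹' {k-j}) := by
    ext ω
    simp only [Set.mem_setOf_eq, Set.mem_iUnion, Set.mem_inter_iff, Set.mem_preimage,
      Set.mem_singleton_iff]
    constructor
    · intro h
      exact ⟨X ω, rfl, by omega⟩
    · rintro ⟨j, h1, h2⟩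
      omega
  have hμ : μ {ω | X ω + Y ω = k} = ∑' j : ℤ, μ (X ⁻¹' {j}) * μ (Y ⁻¹' {k-j}) := by
    rw [hunion, measure_iUnion hdisj hmeas]
    congr 1
    funext j
    exact hindep.measure_inter_preimage_eq_mul _ _ (measurableSet_singleton _)
      (measurableSet_singleton _)
  rw [hμ, ENNReal.tsum_toReal_eq (fun j => ENNReal.mul_ne_top (measure_ne_top μ _)
    (measure_ne_top μ _))]
  rw [← key.tsum_eq]
  apply tsum_congr
  intro j
  rw [ENNReal.toReal_mul]
  have e1 : μ (X ⁻¹' {j}) = μ {ω | X ω = j} := rfl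
  have e2 : μ (Y ⁻¹' {k-j}) = μ {ω | Y ω = k-j} := rfl
  rw [e1, e2, hXpmf, hYpmf]
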